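/- arXiv:0802.0244 — 4 statements merged into one kernel-verified Lean document; each statement's English description precedes it below -/
import Mathlib

section
/- Let K be a group, θ : K → K a group automorphism with θ∘θ = id, V a nonzero finite-dimensional complex vector space, and ρ : K → GL(V) a group homomorphism that is irreducible, i.e. the only complex subspaces of V invariant under ρ(k) for all k ∈ K are {0} and V. Suppose μ, μ′ : V → V are antilinear maps (additive, with μ(c • v) = conj(c) • μ(v) for all c ∈ ℂ, v ∈ V, and likewise for μ′) such that μ∘μ = id, μ′∘μ′ = id, and both satisfy the θ-equivariance μ(ρ(k) v) = ρ(θ(k)) (μ(v)) and μ′(ρ(k) v) = ρ(θ(k)) (μ′(v)) for all k ∈ K, v ∈ V. Then there exists c ∈ ℂ with |c| = 1 such that μ′(v) = c • μ(v) for all v ∈ V. -/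
/-- Uniqueness part of Theorem 3.1: two θ-equivariant antilinear involutions of an
irreducible complex `K`-module differ by a unimodular constant. -/
theorem stmt_1 {K : Type*} [Group K] (θ : K →* K) (hθ : ∀ k, θ (θ k) = k)
    {V : Type*} [AddCommGroup V] [Module ℂ V] [FiniteDimensional ℂ V] [Nontrivial V]
    (ρ : K →* (V →ₗ[ℂ] V)ˣ)
    (hirr : ∀ W : Submodule ℂ V, (∀ (k : K), ∀ v ∈ W, (ρ k : V →ₗ[ℂ] V) v ∈ W) →
      W = ⊥ ∨ W = ⊤)
    (μ μ' : V → V)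
    (hadd : ∀ v w : V, μ (v + w) = μ v + μ w)
    (hconj : ∀ (c : ℂ) (v : V), μ (c • v) = starRingEnd ℂ c • μ v)
    (hinv : ∀ v : V, μ (μ v) = v)
    (hequiv : ∀ (k : K) (v : V), μ ((ρ k : V →ₗ[ℂ] V) v) = (ρ (θ k) : V →ₗ[ℂ] V) (μ v))
    (hadd' : ∀ v w : V, μ' (v + w) = μ' v + μ' w)
    (hconj' : ∀ (c : ℂ) (v : V), μ' (c • v) = starRingEnd ℂ c • μ' v)
    (hinv' : ∀ v : V, μ' (μ' v) = v)
    (hequiv' : ∀ (k : K) (v : V), μ' ((ρ k : V →ₗ[ℂ] V) v) = (ρ (θ k) : V →ₗ[ℂ] V) (μ' v)) :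
    ∃ c : ℂ, ‖c‖ = 1 ∧ ∀ v : V, μ' v = c • μ v := by
  -- T = μ' ∘ μ is ℂ-linear
  set T : V →ₗ[ℂ] V :=
    { toFun := fun v => μ' (μ v)
      map_add' := fun v w => by rw [hadd, hadd']
      map_smul' := fun a v => by
        dsimp only [RingHom.id_apply]
        rw [hconj, hconj']
        simp } with hT
  -- T commutes with ρ
  have hcomm : ∀ (k : K) (v : V), T ((ρ k : V →ₗ[ℂ] V) v) = (ρ k : V →ₗ[ℂ] V) (T v) := by
    intro k v
    show μ' (μ ((ρ k : V →ₗ[ℂ] V) v)) = _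
    rw [hequiv, hequiv', hθ]; rfl
  -- Schur: T has an eigenvalue c, and ker (T - c) is invariant so T = c • id
  obtain ⟨c, hc⟩ := Module.End.exists_eigenvalue T
  obtain ⟨w, hw⟩ := hc.exists_hasEigenvector
  have hker : LinearMap.ker (T - c • (1 : V →ₗ[ℂ] V)) = ⊤ := by
    have hinvW : ∀ (k : K), ∀ v ∈ LinearMap.ker (T - c • (1 : V →ₗ[ℂ] V)),
        (ρ k : V →ₗ[ℂ] V) v ∈ LinearMap.ker (T - c • (1 : V →ₗ[ℂ] V)) := by
      intro k v hv
      simp only [LinearMap.mem_ker, LinearMap.sub_apply, LinearMap.smul_apply,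
        Module.End.one_apply] at hv ⊢
      rw [hcomm, ← map_smul, ← map_sub, hv, map_zero]
    rcases hirr _ hinvW with h | h
    · exfalso
      have hwmem : w ∈ LinearMap.ker (T - c • (1 : V →ₗ[ℂ] V)) := by
        simp [LinearMap.mem_ker, hw.apply_eq_smul]
      rw [h, Submodule.mem_bot] at hwmem
      exact hw.2 hwmem
    · exact h
  have hTc : ∀ v : V, μ' (μ v) = c • v := by
    intro v
    have := LinearMap.mem_ker.mp (hker ▸ Submodule.mem_top : v ∈ LinearMap.ker _)
    simp only [LinearMap.sub_apply, LinearMap.smul_apply, Module.End.one_apply,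
      sub_eq_zero] at this
    exact this
  -- |c| = 1
  obtain ⟨v, hv⟩ := exists_ne (0 : V)
  have key : ((starRingEnd ℂ) c * c) • v = v := by
    have h1 : μ' v = c • μ v := by
      have := hTc (μ v); rwa [hinv] at this
    have := hinv' v
    rw [h1, hconj', hTc, smul_smul] at this
    exact this
  have habs : ‖c‖ = 1 := by
    have h2 : ((starRingEnd ℂ) c * c - 1) • v = 0 := by
      rw [sub_smul, one_smul, key, sub_self]
    have h3 : (starRingEnd ℂ) c * c = 1 := by
      have := (smul_eq_zero.mp h2).resolve_right hv
      rwa [sub_eq_zero] at this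
    have := congrArg norm h3
    rw [norm_mul, Complex.norm_conj, norm_one] at this
    nlinarith [norm_nonneg c]
  refine ⟨c, habs, fun v => ?_⟩
  have := hTc (μ v); rwa [hinv] at this
end

section
/- Let K be a group, θ : K → K a group automorphism with θ∘θ = id, V a nonzero finite-dimensional complex vector space, and ρ : K → GL(V) a group homomorphism that is irreducible, i.e. the only complex subspaces of V invariant under ρ(k) for all k ∈ K are {0} and V. Suppose μ : V → V is an antilinear map (additive, with μ(c • v) = conj(c) • μ(v) for all c ∈ ℂ, v ∈ V) satisfying μ(ρ(k) v) = ρ(θ(k)) (μ(v)) for all k ∈ K, v ∈ V, and suppose there exist v₀ ∈ V with v₀ ≠ 0 and a ∈ ℂ with a ≠ 0 such that μ(v₀) = a • v₀. Then μ(μ(v)) = |a|² • v for all v ∈ V, and the map μ′ := |a|⁻¹ • μ is an antilinear θ-equivariant map with μ′∘μ′ = id. -/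
/-- Normalization step in Theorem 3.1: if a θ-equivariant antilinear map on an irreducible
module has a nonzero eigenvector with eigenvalue `a`, then its square is `|a|² • id` and
`|a|⁻¹ • μ` is a θ-equivariant antilinear involution. -/
theorem stmt_3 {K : Type*} [Group K] (θ : K →* K) (hθ : ∀ k, θ (θ k) = k)
    {V : Type*} [AddCommGroup V] [Module ℂ V] [FiniteDimensional ℂ V] [Nontrivial V]
    (ρ : K →* (V →ₗ[ℂ] V)ˣ)
    (hirr : ∀ W : Submodule ℂ V, (∀ (k : K), ∀ v ∈ W, (ρ k : V →ₗ[ℂ] V) v ∈ W) →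
      W = ⊥ ∨ W = ⊤)
    (μ : V → V)
    (hadd : ∀ v w : V, μ (v + w) = μ v + μ w)
    (hconj : ∀ (c : ℂ) (v : V), μ (c • v) = starRingEnd ℂ c • μ v)
    (hequiv : ∀ (k : K) (v : V), μ ((ρ k : V →ₗ[ℂ] V) v) = (ρ (θ k) : V →ₗ[ℂ] V) (μ v))
    (v₀ : V) (hv₀ : v₀ ≠ 0) (a : ℂ) (ha : a ≠ 0) (hμv₀ : μ v₀ = a • v₀) :
    (∀ v : V, μ (μ v) = ((‖a‖ : ℂ) ^ 2) • v) ∧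
    (∀ v w : V, ((‖a‖ : ℂ)⁻¹ • μ (v + w)) =
        (‖a‖ : ℂ)⁻¹ • μ v + (‖a‖ : ℂ)⁻¹ • μ w) ∧
    (∀ (c : ℂ) (v : V), ((‖a‖ : ℂ)⁻¹ • μ (c • v)) =
        starRingEnd ℂ c • ((‖a‖ : ℂ)⁻¹ • μ v)) ∧
    (∀ (k : K) (v : V), ((‖a‖ : ℂ)⁻¹ • μ ((ρ k : V →ₗ[ℂ] V) v)) =
        (ρ (θ k) : V →ₗ[ℂ] V) ((‖a‖ : ℂ)⁻¹ • μ v)) ∧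
    (∀ v : V, ((‖a‖ : ℂ)⁻¹ • μ ((‖a‖ : ℂ)⁻¹ • μ v)) = v) := by
  have habs : (‖a‖ : ℂ) ≠ 0 := by
    exact_mod_cast norm_ne_zero_iff.mpr ha
  -- μ ∘ μ is ℂ-linear
  have hlin : ∀ (c : ℂ) (v : V), μ (μ (c • v)) = c • μ (μ v) := by
    intro c v
    rw [hconj, hconj, Complex.conj_conj]
  have hconja : (starRingEnd ℂ a) * a = (‖a‖ : ℂ) ^ 2 := by
    rw [mul_comm, Complex.mul_conj]
    norm_cast
    exact (Complex.sq_norm a).symm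
  -- the eigenspace of μ∘μ for |a|²
  set W : Submodule ℂ V :=
    { carrier := {v | μ (μ v) = ((‖a‖ : ℂ) ^ 2) • v}
      add_mem' := by
        intro v w hv hw
        simp only [Set.mem_setOf_eq] at *
        rw [hadd, hadd, hv, hw, smul_add]
      zero_mem' := by
        have h0 : μ 0 = 0 := by simpa using hconj 0 0
        simp only [Set.mem_setOf_eq]
        rw [h0, h0, smul_zero]
      smul_mem' := by
        intro c v hv
        simp only [Set.mem_setOf_eq] at *
        rw [hlin, hv, smul_comm] } with hW
  have hWinv : ∀ (k : K), ∀ v ∈ W, (ρ k : V →ₗ[ℂ] V) v ∈ W := by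
    intro k v hv
    have hvm : μ (μ v) = ((‖a‖ : ℂ) ^ 2) • v := hv
    show μ (μ ((ρ k : V →ₗ[ℂ] V) v)) = ((‖a‖ : ℂ) ^ 2) • (ρ k : V →ₗ[ℂ] V) v
    rw [hequiv, hequiv, hθ, hvm, map_smul]
  have hv₀W : v₀ ∈ W := by
    show μ (μ v₀) = ((‖a‖ : ℂ) ^ 2) • v₀
    rw [hμv₀, hconj, hμv₀, smul_smul, hconja]
  have hWtop : W = ⊤ := by
    rcases hirr W hWinv with h | h
    · rw [h] at hv₀W
      exact absurd ((Submodule.mem_bot ℂ).mp hv₀W) hv₀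
    · exact h
  have h1 : ∀ v : V, μ (μ v) = ((‖a‖ : ℂ) ^ 2) • v := by
    intro v
    have : v ∈ W := hWtop ▸ Submodule.mem_top
    exact this
  refine ⟨h1, ?_, ?_, ?_, ?_⟩
  · intro v w; rw [hadd, smul_add]
  · intro c v; rw [hconj, smul_comm]
  · intro k v; rw [hequiv, map_smul]
  · intro v
    rw [hconj, h1, map_inv₀, Complex.conj_ofReal, smul_smul, smul_smul,
      show ((‖a‖ : ℂ))⁻¹ * (‖a‖ : ℂ)⁻¹ * (‖a‖ : ℂ) ^ 2 = 1 by
        field_simp, one_smul]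
end

section
/- Let G be a group, σ : G → G a group automorphism with σ∘σ = id, H ⊆ G a subgroup, and a ∈ G such that σ(H) = a H a⁻¹ (as subsets of G). Let φ : H → ℂˣ be a group homomorphism satisfying φ(a⁻¹ σ(h) a) = conj(φ(h)) for all h ∈ H. Suppose f : G → ℂ satisfies f(g h) = φ(h)⁻¹ · f(g) for all g ∈ G, h ∈ H, and define η(f) : G → ℂ by η(f)(g) = conj(f(σ(g) a)). Then η(f)(g h) = φ(h)⁻¹ · η(f)(g) for all g ∈ G, h ∈ H. Moreover, if θ : G → G is a group automorphism and k ∈ G satisfies σ(θ(k)) = k, then η(k · f) = θ(k) · η(f), where the left translation action is (g · f)(x) = f(g⁻¹ x). -/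
/-- Construction of the antilinear map η in Theorem 4.1: if σ(H) = aHa⁻¹ and
φ(a⁻¹σ(h)a) = conj(φ(h)), then η(f)(g) = conj(f(σ(g)a)) is again a section of L^φ,
and η intertwines left translation by k with left translation by θ(k) whenever σ(θ(k)) = k. -/
theorem stmt_8 {G : Type*} [Group G] (σ : G →* G) (hσ : ∀ g, σ (σ g) = g)
    (H : Subgroup G) (a : G)
    (hσH : ⇑σ '' (H : Set G) = (fun x => a * x * a⁻¹) '' (H : Set G))
    (φ : H →* ℂˣ)
    (hφ3 : ∀ (h : H) (hm : a⁻¹ * σ ↑h * a ∈ H),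
      (φ ⟨a⁻¹ * σ ↑h * a, hm⟩ : ℂ) = starRingEnd ℂ (φ h : ℂ))
    (f : G → ℂ) (hf : ∀ (g : G) (h : H), f (g * ↑h) = (φ h : ℂ)⁻¹ * f g) :
    (∀ (g : G) (h : H),
      starRingEnd ℂ (f (σ (g * ↑h) * a)) = (φ h : ℂ)⁻¹ * starRingEnd ℂ (f (σ g * a))) ∧
    (∀ (θ : G ≃* G) (k : G), σ (θ k) = k → ∀ g : G,
      starRingEnd ℂ (f (k⁻¹ * (σ g * a))) = starRingEnd ℂ (f (σ ((θ k)⁻¹ * g) * a))) := by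
  constructor
  · intro g h
    -- σ h ∈ a H a⁻¹, hence a⁻¹ σ h a ∈ H
    have hmem : a⁻¹ * σ ↑h * a ∈ H := by
      have : σ (↑h : G) ∈ ⇑σ '' (H : Set G) := ⟨↑h, h.2, rfl⟩
      rw [hσH] at this
      obtain ⟨x, hx, hx'⟩ := this
      have : a⁻¹ * σ ↑h * a = x := by rw [← hx']; group
      rw [this]; exact hx
    have key : σ (g * ↑h) * a = σ g * a * (a⁻¹ * σ ↑h * a) := by
      rw [map_mul]; group
    rw [key, hf (σ g * a) ⟨_, hmem⟩, map_mul, map_inv₀, hφ3 h hmem]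
    simp
  · intro θ k hk g
    congr 1
    rw [map_mul, map_inv, hk]
    group
end

section
/- Let G be a group, σ : G → G a group automorphism with σ∘σ = id, H ⊆ G a subgroup, and a ∈ G such that σ(H) = a H a⁻¹ (as subsets of G). Let φ : H → ℂˣ be a group homomorphism satisfying φ(u h u⁻¹) = φ(h) for all h ∈ H and u ∈ N_G(H). Then the map ψ : H → ℂˣ defined by ψ(h) = φ(h) · conj(φ(a⁻¹ σ(h) a)) is a group homomorphism and satisfies both ψ(a⁻¹ σ(h) a) = conj(ψ(h)) for all h ∈ H, and ψ(u h u⁻¹) = ψ(h) for all h ∈ H and u ∈ N_G(H). -/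
/-- Modification step in the proof of Theorem 4.3: from a character φ of H satisfying
condition (2) (invariance under conjugation by the normalizer), the character
ψ(h) = φ(h)·conj(φ(a⁻¹σ(h)a)) satisfies both condition (3) and condition (2). -/
theorem stmt_11 {G : Type*} [Group G] (σ : G →* G) (hσ : ∀ g, σ (σ g) = g)
    (H : Subgroup G) (a : G)
    (hσH : ⇑σ '' (H : Set G) = (fun x => a * x * a⁻¹) '' (H : Set G))
    (φ : H →* ℂˣ)
    (hφ2 : ∀ u : G, u ∈ Subgroup.normalizer (H : Set G) → ∀ (h : H) (hm : u * ↑h * u⁻¹ ∈ H),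
      φ ⟨u * ↑h * u⁻¹, hm⟩ = φ h) :
    ∃ ψ : H →* ℂˣ,
      (∀ (h : H) (hm : a⁻¹ * σ ↑h * a ∈ H),
        (ψ h : ℂ) = (φ h : ℂ) * starRingEnd ℂ (φ ⟨a⁻¹ * σ ↑h * a, hm⟩ : ℂ)) ∧
      (∀ (h : H) (hm : a⁻¹ * σ ↑h * a ∈ H),
        (ψ ⟨a⁻¹ * σ ↑h * a, hm⟩ : ℂ) = starRingEnd ℂ (ψ h : ℂ)) ∧
      (∀ u : G, u ∈ Subgroup.normalizer (H : Set G) → ∀ (h : H) (hm : u * ↑h * u⁻¹ ∈ H),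
        ψ ⟨u * ↑h * u⁻¹, hm⟩ = ψ h) := by
  have mem1 : ∀ h : G, h ∈ H → a⁻¹ * σ h * a ∈ H := by
    intro h hh
    have hmem : σ h ∈ (fun x => a * x * a⁻¹) '' (H : Set G) := by
      rw [← hσH]; exact ⟨h, hh, rfl⟩
    obtain ⟨x, hx, hxe⟩ := hmem
    have he : a⁻¹ * σ h * a = x := by rw [← hxe]; group
    rwa [he]
  have mem2 : ∀ h : G, h ∈ H → ∃ x ∈ (H : Set G), a * h * a⁻¹ = σ x := by
    intro h hh
    have hmem : a * h * a⁻¹ ∈ ⇑σ '' (H : Set G) := by rw [hσH]; exact ⟨h, hh, rfl⟩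
    obtain ⟨x, hx, hxe⟩ := hmem
    exact ⟨x, hx, hxe.symm⟩
  have keyN : ∀ u : G, u ∈ Subgroup.normalizer (H : Set G) → ∀ h : G, h ∈ H →
      (a⁻¹ * σ u * a) * h * (a⁻¹ * σ u * a)⁻¹ ∈ H := by
    intro u hu h hh
    obtain ⟨x, hx, hxe⟩ := mem2 h hh
    have hx' : u * x * u⁻¹ ∈ H := (Subgroup.mem_normalizer_iff.mp hu x).mp hx
    have he : (a⁻¹ * σ u * a) * h * (a⁻¹ * σ u * a)⁻¹ = a⁻¹ * σ (u * x * u⁻¹) * a := by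
      rw [map_mul, map_mul, map_inv, ← hxe]; group
    rw [he]; exact mem1 _ hx'
  have normσ : ∀ u : G, u ∈ Subgroup.normalizer (H : Set G) → a⁻¹ * σ u * a ∈ Subgroup.normalizer (H : Set G) := by
    intro u hu
    rw [Subgroup.mem_normalizer_iff]
    intro g
    constructor
    · exact keyN u hu g
    · intro hg
      have h2 := keyN u⁻¹ ((Subgroup.normalizer (H : Set G)).inv_mem hu) _ hg
      have he : (a⁻¹ * σ u⁻¹ * a) * ((a⁻¹ * σ u * a) * g * (a⁻¹ * σ u * a)⁻¹) *
          (a⁻¹ * σ u⁻¹ * a)⁻¹ = g := by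
        rw [map_inv]; group
      rwa [he] at h2
  have key2 : ∀ h : G, h ∈ H → (σ a * a) * h * (σ a * a)⁻¹ ∈ H := by
    intro h hh
    obtain ⟨x, hx, hxe⟩ := mem2 h hh
    obtain ⟨y, hy, hye⟩ := mem2 x hx
    have he : (σ a * a) * h * (σ a * a)⁻¹ = y := by
      have h1 : σ a * (a * h * a⁻¹) * (σ a)⁻¹ = y := by
        rw [hxe, ← map_inv, ← map_mul, ← map_mul, hye, hσ]
      rw [← h1]; group
    rw [he]; exact hy
  have key2' : ∀ h : G, h ∈ H → (σ a * a)⁻¹ * h * (σ a * a) ∈ H := by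
    intro h hh
    have h2 : a⁻¹ * σ (a⁻¹ * σ h * a) * a ∈ H := mem1 _ (mem1 h hh)
    have he : a⁻¹ * σ (a⁻¹ * σ h * a) * a = (σ a * a)⁻¹ * h * (σ a * a) := by
      rw [map_mul, map_mul, map_inv, hσ]; group
    rwa [he] at h2
  have normb : (σ a * a)⁻¹ ∈ Subgroup.normalizer (H : Set G) := by
    rw [Subgroup.mem_normalizer_iff]
    intro g
    constructor
    · intro hg
      rw [inv_inv]
      exact key2' g hg
    · intro hg
      have h2 := key2 _ hg
      have he : (σ a * a) * ((σ a * a)⁻¹ * g * ((σ a * a)⁻¹)⁻¹) * (σ a * a)⁻¹ = g := by group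
      rwa [he] at h2
  let τ : H →* H := MonoidHom.mk' (fun h => ⟨a⁻¹ * σ ↑h * a, mem1 ↑h h.2⟩) (by
    intro h1 h2
    apply Subtype.ext
    push_cast
    rw [map_mul]
    group)
  let ψ : H →* ℂˣ := φ * ((Units.map (starRingEnd ℂ).toMonoidHom).comp (φ.comp τ))
  have ψval : ∀ h : H, (ψ h : ℂ) = (φ h : ℂ) * starRingEnd ℂ (φ (τ h) : ℂ) := by
    intro h
    simp [ψ, Units.coe_map]
  have hττ : ∀ h : H, φ (τ (τ h)) = φ h := by
    intro h
    have hm : (σ a * a)⁻¹ * ↑h * ((σ a * a)⁻¹)⁻¹ ∈ H := by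
      rw [inv_inv]; exact key2' _ h.2
    have he : τ (τ h) = ⟨(σ a * a)⁻¹ * ↑h * ((σ a * a)⁻¹)⁻¹, hm⟩ := by
      apply Subtype.ext
      show a⁻¹ * σ (a⁻¹ * σ ↑h * a) * a = _
      rw [map_mul, map_mul, map_inv, hσ]
      group
    rw [he]
    exact hφ2 _ normb h hm
  refine ⟨ψ, ?_, ?_, ?_⟩
  · intro h hm
    have he : (⟨a⁻¹ * σ ↑h * a, hm⟩ : H) = τ h := rfl
    rw [he]; exact ψval h
  · intro h hm
    have he : (⟨a⁻¹ * σ ↑h * a, hm⟩ : H) = τ h := rfl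
    rw [he, ψval (τ h), ψval h]
    rw [hττ h]
    rw [map_mul, Complex.conj_conj]
    ring
  · intro u hu h hm
    have hm' : (a⁻¹ * σ u * a) * ↑(τ h) * (a⁻¹ * σ u * a)⁻¹ ∈ H := keyN u hu _ (τ h).2
    have he : τ ⟨u * ↑h * u⁻¹, hm⟩ = ⟨(a⁻¹ * σ u * a) * ↑(τ h) * (a⁻¹ * σ u * a)⁻¹, hm'⟩ := by
      apply Subtype.ext
      show a⁻¹ * σ (u * ↑h * u⁻¹) * a = _
      show _ = (a⁻¹ * σ u * a) * (a⁻¹ * σ ↑h * a) * (a⁻¹ * σ u * a)⁻¹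
      rw [map_mul, map_mul, map_inv]
      group
    have hfix : φ (τ ⟨u * ↑h * u⁻¹, hm⟩) = φ (τ h) := by
      rw [he]
      exact hφ2 _ (normσ u hu) (τ h) hm'
    have := hφ2 u hu h hm
    have hv1 := ψval ⟨u * ↑h * u⁻¹, hm⟩
    have hv2 := ψval h
    have : (ψ ⟨u * ↑h * u⁻¹, hm⟩ : ℂ) = (ψ h : ℂ) := by
      rw [hv1, hv2, hfix, this]
    exact Units.ext this
end
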